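/- For a subadditive multivariate entropy function S on ℕⁿ (i.e., S of a disjoint union of translated boxes is at most the sum), translation invariance implies that if S(k₁,...,kₙ)/(k₁⋯kₙ) is finite for some fixed box (k₁,...,kₙ) with all kᵢ ≥ 1, then limsup over aᵢ → ∞ of S(a₁,...,aₙ)/(a₁⋯aₙ) ≤ S(k₁,...,kₙ)/(k₁⋯kₙ); in particular the entropy density is finite. -/

import Mathlib

open Filter

/-- For a monotone, translation-invariant-subadditive entropy function `S` on `ℕⁿ`
(`S` of a box of side `pᵢ kᵢ + qᵢ` is at most `(∏ pᵢ) S(k)` plus a lower-order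
correction bounded by a sum of terms each missing at least one factor `pᵢ`), the
entropy density is finite: the limsup of `S(a)/(a₁⋯aₙ)` as all `aᵢ → ∞` is at most
`S(k)/(k₁⋯kₙ)`. -/
theorem entropy_density_finite (n : ℕ) (S : (Fin n → ℕ) → ℝ)
    (hpos : ∀ a, 0 ≤ S a) (hmono : Monotone S)
    (k : Fin n → ℕ) (hk : ∀ i, 1 ≤ k i) (B : ℝ) (hB : 0 ≤ B)
    (hsub : ∀ p q : Fin n → ℕ, (∀ i, q i ≤ k i - 1) →
      S (fun i => p i * k i + q i) ≤
        (∏ i, (p i : ℝ)) * S k +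
          B * ∑ i, ∏ j ∈ Finset.univ.erase i, (p j : ℝ)) :
    Filter.limsup (fun a : Fin n → ℕ => S a / ∏ i, (a i : ℝ)) Filter.atTop ≤
      S k / ∏ i, (k i : ℝ) := by
  have hkR : (0:ℝ) < ∏ i, (k i : ℝ) :=
    Finset.prod_pos fun i _ => by exact_mod_cast hk i
  set L := S k / ∏ i, (k i : ℝ) with hLdef
  refine le_of_forall_pos_le_add fun ε hε => ?_
  obtain ⟨N0, hN0⟩ := exists_nat_ge (B * n / ε)
  set N := max N0 1 with hNdef
  have hN1 : (1:ℕ) ≤ N := le_max_right _ _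
  have hNR : (0:ℝ) < N := by exact_mod_cast hN1
  have hBn : B * n / N ≤ ε := by
    rw [div_le_iff₀ hNR]
    have hN0R : (N0:ℝ) ≤ N := by exact_mod_cast le_max_left N0 1
    rw [div_le_iff₀ hε] at hN0
    nlinarith
  have hev : ∀ᶠ a : Fin n → ℕ in atTop, S a / ∏ i, (a i : ℝ) ≤ L + ε := by
    filter_upwards [eventually_ge_atTop (fun _ => N)] with a ha
    have haN : ∀ i, N ≤ a i := fun i => ha i
    set P := ∏ i, (a i : ℝ) with hPdef
    have hP : 0 < P := Finset.prod_pos fun i _ => by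
      have : 1 ≤ a i := le_trans hN1 (haN i)
      exact_mod_cast this
    set p : Fin n → ℕ := fun i => a i / k i with hpdef
    set q : Fin n → ℕ := fun i => a i % k i with hqdef
    have hq : ∀ i, q i ≤ k i - 1 := fun i => by
      have h1 : q i = a i % k i := rfl
      have := Nat.mod_lt (a i) (hk i)
      omega
    have ha' : (fun i => p i * k i + q i) = a := funext fun i =>
      Nat.div_add_mod' (a i) (k i)
    have hS := hsub p q hq
    rw [ha'] at hS
    have h1 : (∏ i, (p i:ℝ)) * S k ≤ L * P := by
      have hprod : (∏ i, (p i:ℝ)) * (∏ i, (k i:ℝ)) ≤ P := by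
        rw [← Finset.prod_mul_distrib]
        exact Finset.prod_le_prod (fun i _ => by positivity)
          (fun i _ => by exact_mod_cast Nat.div_mul_le_self (a i) (k i))
      calc (∏ i, (p i:ℝ)) * S k ≤ (P / ∏ i, (k i:ℝ)) * S k := by
            refine mul_le_mul_of_nonneg_right ?_ (hpos k)
            rw [le_div_iff₀ hkR]; exact hprod
        _ = L * P := by rw [hLdef]; ring
    have h2 : B * ∑ i, ∏ j ∈ Finset.univ.erase i, (p j:ℝ) ≤ ε * P := by
      have hterm : ∀ i, (∏ j ∈ Finset.univ.erase i, (p j:ℝ)) ≤ P / N := by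
        intro i
        have ht1 : (∏ j ∈ Finset.univ.erase i, (p j:ℝ)) ≤
            ∏ j ∈ Finset.univ.erase i, (a j:ℝ) :=
          Finset.prod_le_prod (fun j _ => by positivity)
            (fun j _ => by exact_mod_cast Nat.div_le_self (a j) (k j))
        have ht2 : (N:ℝ) * ∏ j ∈ Finset.univ.erase i, (a j:ℝ) ≤ P := by
          calc (N:ℝ) * ∏ j ∈ Finset.univ.erase i, (a j:ℝ)
              ≤ (a i:ℝ) * ∏ j ∈ Finset.univ.erase i, (a j:ℝ) := by
                refine mul_le_mul_of_nonneg_right ?_ (by positivity)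
                exact_mod_cast haN i
            _ = P := by
                rw [hPdef]
                exact Finset.mul_prod_erase Finset.univ (fun j => (a j : ℝ)) (Finset.mem_univ i)
        refine ht1.trans ?_
        rw [le_div_iff₀ hNR]
        nlinarith
      calc B * ∑ i, ∏ j ∈ Finset.univ.erase i, (p j:ℝ)
          ≤ B * ∑ _i : Fin n, (P / N) := by
            refine mul_le_mul_of_nonneg_left ?_ hB
            exact Finset.sum_le_sum fun i _ => hterm i
        _ = B * (n * (P / N)) := by
            rw [Finset.sum_const, Finset.card_univ, Fintype.card_fin, nsmul_eq_mul]
        _ = (B * n / N) * P := by ring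
        _ ≤ ε * P := mul_le_mul_of_nonneg_right hBn hP.le
    rw [div_le_iff₀ hP]
    calc S a ≤ (∏ i, (p i:ℝ)) * S k +
        B * ∑ i, ∏ j ∈ Finset.univ.erase i, (p j:ℝ) := hS
      _ ≤ L * P + ε * P := add_le_add h1 h2
      _ = (L + ε) * P := by ring
  refine Filter.limsup_le_of_le ?_ hev
  exact Filter.isCoboundedUnder_le_of_le _ fun a =>
    div_nonneg (hpos a) (Finset.prod_nonneg fun i _ => Nat.cast_nonneg _)
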